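/- V-local isomorphisms (F-global on function symbols) are compatible with rewriting: let R = (F,V,𝓡) and R' = (F',V',𝓡') be TRSs, φ = (φ₁,…,φₙ) a family of term isomorphisms witnessing a local isomorphism from R to R' such that all φᵢ agree on F (φ₁|_F = … = φₙ|_F). Then for all terms s, t over (F,V) and every index i: s →_R t if and only if φᵢ(s) →_{R'} φᵢ(t). -/

import Mathlib

set_option autoImplicit false

universe u
variable {F V F' V' F'' V'' : Type}

inductive Term (F V : Type) : Type where
  | var : V → Term F V
  | app : F → List (Term F V) → Term F V

namespace Term

def map (φF : F → F') (φV : V → V') : Term F V → Term F' V'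
  | var x => var (φV x)
  | app f ts => app (φF f) (ts.attach.map fun t => map φF φV t.1)

decreasing_by
  have := List.sizeOf_lt_of_mem t.2
  simp_wf
  omega

def subst (σ : V → Term F V) : Term F V → Term F V
  | var x => σ x
  | app f ts => app f (ts.attach.map fun t => subst σ t.1)

decreasing_by
  have := List.sizeOf_lt_of_mem t.2
  simp_wf
  omega

def vars : Term F V → Set V
  | var x => {x}
  | app _ ts => {v | ∃ t ∈ ts.attach, v ∈ vars t.1}

decreasing_by
  have := List.sizeOf_lt_of_mem t.2
  simp_wf
  omega

end Term

inductive Ctx (F V : Type) : Type where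
  | hole : Ctx F V
  | app : F → List (Term F V) → Ctx F V → List (Term F V) → Ctx F V

def Ctx.fill : Ctx F V → Term F V → Term F V
  | .hole, t => t
  | .app f pre C post, t => .app f (pre ++ [C.fill t] ++ post)

def Ctx.map (φF : F → F') (φV : V → V') : Ctx F V → Ctx F' V'
  | .hole => .hole
  | .app f pre C post => .app (φF f) (pre.map (Term.map φF φV)) (C.map φF φV) (post.map (Term.map φF φV))

abbrev Rule (F V : Type) := Term F V × Term F V

def ruleMap (φF : F → F') (φV : V → V') (p : Rule F V) : Rule F' V' :=
  (p.1.map φF φV, p.2.map φF φV)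

def Rewrites (𝓡 : Set (Rule F V)) (s t : Term F V) : Prop :=
  ∃ (C : Ctx F V) (σ : V → Term F V) (p : Rule F V),
    p ∈ 𝓡 ∧ s = C.fill (p.1.subst σ) ∧ t = C.fill (p.2.subst σ)

def IsTermIso (ar : F → ℕ) (ar' : F' → ℕ) (φF : F → F') (φV : V → V') : Prop :=
  Function.Bijective φF ∧ Function.Bijective φV ∧ ∀ f, ar' (φF f) = ar f

def IsTRS (ar : F → ℕ) (𝓡 : Set (Rule F V)) : Prop :=
  𝓡.Finite ∧ ∀ p ∈ 𝓡, (∀ x, p.1 ≠ Term.var x) ∧ p.2.vars ⊆ p.1.vars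


namespace Term

theorem map_map' (φF : F → F') (φV : V → V') (ψF : F' → F'') (ψV : V' → V'') :
    ∀ t : Term F V, (t.map φF φV).map ψF ψV = t.map (ψF ∘ φF) (ψV ∘ φV) := by
  intro t
  induction t using Term.map.induct with
  | case1 x => simp [Term.map]
  | case2 f ts ih =>
    simp only [Term.map, List.attach_map_val, List.map_map, Term.app.injEq, Function.comp]
    refine ⟨trivial, ?_⟩
    apply List.map_congr_left
    intro t ht
    exact ih ⟨t, ht⟩

theorem map_id : ∀ t : Term F V, t.map id id = t := by
  intro t
  induction t using Term.map.induct with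
  | case1 x => simp [Term.map]
  | case2 f ts ih =>
    simp only [Term.map, List.attach_map_val, Term.app.injEq, id]
    refine ⟨trivial, ?_⟩
    conv_rhs => rw [← List.map_id ts]
    apply List.map_congr_left
    intro t ht
    exact ih ⟨t, ht⟩

theorem map_subst (φF : F → F') (φV : V → V') (φV' : V → V')
    (σ : V → Term F V) (σ' : V' → Term F' V')
    (h : ∀ x, σ' (φV' x) = (σ x).map φF φV) :
    ∀ t : Term F V, (t.subst σ).map φF φV = (t.map φF φV').subst σ' := by
  intro t
  induction t using Term.subst.induct with
  | case1 x => simp [Term.map, Term.subst, h]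
  | case2 f ts ih =>
    simp only [Term.map, Term.subst, List.attach_map_val, List.map_map, Term.app.injEq,
      Function.comp]
    refine ⟨trivial, ?_⟩
    apply List.map_congr_left
    intro t ht
    exact ih ⟨t, ht⟩

end Term

theorem Ctx.fill_map (φF : F → F') (φV : V → V') :
    ∀ (C : Ctx F V) (t : Term F V),
      (C.fill t).map φF φV = (C.map φF φV).fill (t.map φF φV) := by
  intro C
  induction C with
  | hole => intro t; rfl
  | app f pre C post ih =>
    intro t
    simp only [Ctx.fill, Ctx.map, Term.map, List.attach_map_val, List.map_append,
      List.map_cons, List.map_nil, ih]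

theorem vLocal_iso_compatible_with_rewriting
    {F V F' V' : Type} (ar : F → ℕ) (ar' : F' → ℕ)
    (𝓡 : Set (Rule F V)) (𝓡' : Set (Rule F' V'))
    (hR : IsTRS ar 𝓡) (hR' : IsTRS ar' 𝓡')
    (φF : F → F') (ΦV : Rule F V → V → V')
    (hiso : ∀ p ∈ 𝓡, IsTermIso ar ar' φF (ΦV p))
    (him : (fun p => ruleMap φF (ΦV p) p) '' 𝓡 = 𝓡') :
    ∀ p ∈ 𝓡, ∀ s t : Term F V,
      Rewrites 𝓡 s t ↔ Rewrites 𝓡' (Term.map φF (ΦV p) s) (Term.map φF (ΦV p) t) := by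
  intro p hp s t
  obtain ⟨hφF, hφVp, _⟩ := hiso p hp
  let eF : F ≃ F' := Equiv.ofBijective φF hφF
  let eP : V ≃ V' := Equiv.ofBijective (ΦV p) hφVp
  have hmapinv : ∀ u : Term F V, (u.map φF (ΦV p)).map eF.symm eP.symm = u := by
    intro u
    rw [Term.map_map']
    have h1 : (⇑eF.symm ∘ φF) = id := by
      funext x; exact eF.symm_apply_apply x
    have h2 : (⇑eP.symm ∘ ΦV p) = id := by
      funext x; exact eP.symm_apply_apply x
    rw [h1, h2, Term.map_id]
  constructor
  · rintro ⟨C, σ, q, hq, hs, ht⟩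
    obtain ⟨_, hφVq, _⟩ := hiso q hq
    let eQ : V ≃ V' := Equiv.ofBijective (ΦV q) hφVq
    refine ⟨C.map φF (ΦV p), fun y => (σ (eQ.symm y)).map φF (ΦV p),
      ruleMap φF (ΦV q) q, ?_, ?_, ?_⟩
    · rw [← him]; exact ⟨q, hq, rfl⟩
    · rw [hs, Ctx.fill_map]
      congr 1
      exact Term.map_subst _ _ _ _ _ (fun x => by simp [eQ]) q.1
    · rw [ht, Ctx.fill_map]
      congr 1
      exact Term.map_subst _ _ _ _ _ (fun x => by simp [eQ]) q.2
  · rintro ⟨C', σ', q', hq', hs, ht⟩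
    rw [← him] at hq'
    obtain ⟨q, hq, rfl⟩ := hq'
    obtain ⟨_, hφVq, _⟩ := hiso q hq
    let eQ : V ≃ V' := Equiv.ofBijective (ΦV q) hφVq
    refine ⟨C'.map eF.symm eP.symm, fun x => (σ' (eQ x)).map eF.symm eP.symm, q, hq, ?_, ?_⟩
    · have := congrArg (Term.map (F' := F) (V' := V) eF.symm eP.symm) hs
      rw [hmapinv, Ctx.fill_map] at this
      rw [this]
      congr 1
      have := Term.map_subst (φF := (eF.symm : F' → F)) (φV := (eP.symm : V' → V))
        (φV' := (eQ.symm : V' → V)) σ' (fun x => (σ' (eQ x)).map eF.symm eP.symm)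
        (fun y => by simp) (ruleMap φF (ΦV q) q).1
      rw [this]
      congr 1
      show (q.1.map φF (ΦV q)).map eF.symm eQ.symm = q.1
      rw [Term.map_map']
      have h1 : (⇑eF.symm ∘ φF) = id := by funext x; exact eF.symm_apply_apply x
      have h2 : (⇑eQ.symm ∘ ΦV q) = id := by funext x; exact eQ.symm_apply_apply x
      rw [h1, h2, Term.map_id]
    · have := congrArg (Term.map (F' := F) (V' := V) eF.symm eP.symm) ht
      rw [hmapinv, Ctx.fill_map] at this
      rw [this]
      congr 1
      have := Term.map_subst (φF := (eF.symm : F' → F)) (φV := (eP.symm : V' → V))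
        (φV' := (eQ.symm : V' → V)) σ' (fun x => (σ' (eQ x)).map eF.symm eP.symm)
        (fun y => by simp) (ruleMap φF (ΦV q) q).2
      rw [this]
      congr 1
      show (q.2.map φF (ΦV q)).map eF.symm eQ.symm = q.2
      rw [Term.map_map']
      have h1 : (⇑eF.symm ∘ φF) = id := by funext x; exact eF.symm_apply_apply x
      have h2 : (⇑eQ.symm ∘ ΦV q) = id := by funext x; exact eQ.symm_apply_apply x
      rw [h1, h2, Term.map_id]
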